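/- Let (M, Σ, μ, T) be a Bernoulli system (a measure-preserving system isomorphic to a Bernoulli shift with finitely many outcomes) whose underlying metric space (M, d) is separable and whose σ-algebra contains all open balls. Then for every ε > 0 there exists an irreducible and aperiodic finite-state Markov process with outcomes in M such that (M, Σ, μ, T) is ε-congruent to (the deterministic representation of) this Markov process. -/

import Mathlib

open MeasureTheory Set
open scoped ENNReal

set_option linter.unusedSectionVars false
set_option linter.unreachableTactic false
set_option linter.unusedTactic false
set_option maxHeartbeats 1000000



def IsIso {M Ω : Type*} [MeasurableSpace M] [MeasurableSpace Ω]
    (μ : Measure M) (ν : Measure Ω) (T : M → M) (S : Ω → Ω) (φ : M → Ω) : Prop :=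
  ∃ (Mh : Set M) (Ωh : Set Ω), MeasurableSet Mh ∧ MeasurableSet Ωh ∧
    μ Mhᶜ = 0 ∧ ν Ωhᶜ = 0 ∧ Set.MapsTo T Mh Mh ∧ Set.MapsTo S Ωh Ωh ∧
    Set.BijOn φ Mh Ωh ∧
    (∀ A : Set M, MeasurableSet A → A ⊆ Mh → MeasurableSet (φ '' A) ∧ ν (φ '' A) = μ A) ∧
    (∀ B : Set Ω, MeasurableSet B → B ⊆ Ωh → MeasurableSet (Mh ∩ φ ⁻¹' B)) ∧
    (∀ m ∈ Mh, φ (T m) = S (φ m))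

theorem isIso_comp {M Ω Λ : Type*} [MeasurableSpace M] [MeasurableSpace Ω] [MeasurableSpace Λ]
    {μ : Measure M} {ν : Measure Ω} {κ : Measure Λ} {T : M → M} {S : Ω → Ω} {R : Λ → Λ}
    {φ : M → Ω} {ψ : Ω → Λ}
    (h1 : IsIso μ ν T S φ) (h2 : IsIso ν κ S R ψ) : IsIso μ κ T R (ψ ∘ φ) := by
  obtain ⟨Mh, Ωh, hMm, hΩm, hMc, hΩc, hTM, hSΩ, hbij, himg, hpre, heqv⟩ := h1
  obtain ⟨Ω'h, Λh, hΩ'm, hΛm, hΩ'c, hΛc, hSΩ', hRΛ, hbij', himg', hpre', heqv'⟩ := h2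
  have hΩΩ'm : MeasurableSet (Ωh ∩ Ω'h) := hΩm.inter hΩ'm
  set Mh2 : Set M := Mh ∩ φ ⁻¹' (Ωh ∩ Ω'h) with hMh2
  have hMh2m : MeasurableSet Mh2 := hpre _ hΩΩ'm inter_subset_left
  have hMh2c : μ Mh2ᶜ = 0 := by
    have h1' : Mh2ᶜ ⊆ Mhᶜ ∪ (Mh ∩ φ ⁻¹' (Ωh ∩ Ω'hᶜ)) := by
      intro m hm
      by_cases hmM : m ∈ Mh
      · right
        refine ⟨hmM, hbij.mapsTo hmM, ?_⟩
        intro hmo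
        exact hm ⟨hmM, hbij.mapsTo hmM, hmo⟩
      · exact Or.inl hmM
    refine le_antisymm ?_ zero_le
    refine le_trans (measure_mono h1') ?_
    refine le_trans (measure_union_le _ _) ?_
    rw [hMc, zero_add]
    -- μ (Mh ∩ φ ⁻¹' (Ωh ∩ Ω'hᶜ)) = ν (φ '' (Mh ∩ φ ⁻¹' (Ωh ∩ Ω'hᶜ))) ≤ ν Ω'hᶜ = 0
    have hmeas : MeasurableSet (Mh ∩ φ ⁻¹' (Ωh ∩ Ω'hᶜ)) :=
      hpre _ (hΩm.inter hΩ'm.compl) inter_subset_left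
    have := (himg _ hmeas inter_subset_left).2
    rw [← this]
    refine le_trans (measure_mono ?_) hΩ'c.le
    rintro x ⟨m, ⟨hmM, hmΩ, hmΩ'⟩, rfl⟩
    exact hmΩ'
  set Λ2 : Set Λ := ψ '' (Ωh ∩ Ω'h) with hΛ2
  have hΛ2m : MeasurableSet Λ2 := (himg' _ hΩΩ'm inter_subset_right).1
  have hΛ2sub : Λ2 ⊆ Λh := by
    rintro x ⟨ω, hω, rfl⟩; exact hbij'.mapsTo hω.2
  have hΛ2c : κ Λ2ᶜ = 0 := by
    have h1' : Λ2ᶜ ⊆ Λhᶜ ∪ (ψ '' (Ω'h ∩ Ωhᶜ)) := by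
      intro x hx
      by_cases hxΛ : x ∈ Λh
      · right
        obtain ⟨ω, hω, rfl⟩ := hbij'.surjOn hxΛ
        refine ⟨ω, ⟨hω, ?_⟩, rfl⟩
        intro hωΩ
        exact hx ⟨ω, ⟨hωΩ, hω⟩, rfl⟩
      · exact Or.inl hxΛ
    refine le_antisymm ?_ zero_le
    refine le_trans (measure_mono h1') ?_
    refine le_trans (measure_union_le _ _) ?_
    rw [hΛc, zero_add]
    have hmeas : MeasurableSet (Ω'h ∩ Ωhᶜ) := hΩ'm.inter hΩm.compl
    rw [(himg' _ hmeas inter_subset_left).2]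
    refine le_trans (measure_mono fun ω hω => hω.2) hΩc.le
  refine ⟨Mh2, Λ2, hMh2m, hΛ2m, hMh2c, hΛ2c, ?_, ?_, ?_, ?_, ?_, ?_⟩
  · -- MapsTo T Mh2 Mh2
    rintro m ⟨hmM, hmΩ, hmΩ'⟩
    refine ⟨hTM hmM, ?_⟩
    rw [Set.mem_preimage, heqv m hmM]
    exact ⟨hSΩ hmΩ, hSΩ' hmΩ'⟩
  · -- MapsTo R Λ2 Λ2
    rintro x ⟨ω, hω, rfl⟩
    rw [← heqv' ω hω.2]
    exact ⟨S ω, ⟨hSΩ hω.1, hSΩ' hω.2⟩, rfl⟩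
  · -- BijOn
    have hφ : Set.BijOn φ Mh2 (Ωh ∩ Ω'h) := by
      refine ⟨fun m hm => hm.2, hbij.injOn.mono inter_subset_left, ?_⟩
      rintro ω hω
      obtain ⟨m, hm, rfl⟩ := hbij.surjOn hω.1
      exact ⟨m, ⟨hm, hω⟩, rfl⟩
    exact ((hbij'.injOn.mono inter_subset_right).bijOn_image).comp hφ
  · -- image measure
    intro A hA hAsub
    have hAsub' : A ⊆ Mh := hAsub.trans inter_subset_left
    obtain ⟨hφA, hφAν⟩ := himg A hA hAsub'
    have hφAsub : φ '' A ⊆ Ω'h := by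
      rintro x ⟨m, hm, rfl⟩; exact (hAsub hm).2.2
    obtain ⟨hψφA, hψφAκ⟩ := himg' _ hφA hφAsub
    rw [Set.image_comp]
    exact ⟨hψφA, by rw [hψφAκ, hφAν]⟩
  · -- preimage measurability
    intro B hB hBsub
    have hBsub' : B ⊆ Λh := hBsub.trans hΛ2sub
    have h1' : MeasurableSet (Ω'h ∩ ψ ⁻¹' B) := hpre' B hB hBsub'
    have h2' : MeasurableSet (Mh ∩ φ ⁻¹' (Ωh ∩ (Ω'h ∩ ψ ⁻¹' B))) :=
      hpre _ (hΩm.inter h1') inter_subset_left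
    have : Mh2 ∩ (ψ ∘ φ) ⁻¹' B = Mh2 ∩ (Mh ∩ φ ⁻¹' (Ωh ∩ (Ω'h ∩ ψ ⁻¹' B))) := by
      ext m
      constructor
      · rintro ⟨⟨hmM, hmΩ, hmΩ'⟩, hmB⟩
        exact ⟨⟨hmM, hmΩ, hmΩ'⟩, hmM, ⟨hmΩ, hmΩ', hmB⟩⟩
      · rintro ⟨hm2, hmM, hmΩ, hmΩ', hmB⟩
        exact ⟨hm2, hmB⟩
    rw [this]
    exact hMh2m.inter h2'
  · -- equivariance
    rintro m ⟨hmM, hmΩ, hmΩ'⟩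
    simp only [Function.comp_apply]
    rw [heqv m hmM, heqv' _ hmΩ']



section Words

variable {A : Type*}

def wndAt (n : ℕ) (t : ℤ) (ω : ℤ → A) : Fin (2*n+1) → A := fun i => ω (t + i - n)

def Compat (n : ℕ) (u u' : Fin (2*n+1) → A) : Prop :=
  ∀ (j : ℕ) (h : j + 1 < 2*n+1), u' ⟨j, by omega⟩ = u ⟨j+1, h⟩

lemma compat_wndAt (n : ℕ) (t : ℤ) (ω : ℤ → A) :
    Compat n (wndAt n t ω) (wndAt n (t+1) ω) := by
  intro j h
  simp only [wndAt]
  congr 1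
  omega

lemma chain_eq {n r : ℕ} {u : ℕ → Fin (2*n+1) → A}
    (hc : ∀ t < r, Compat n (u t) (u (t+1))) :
    ∀ (d t i : ℕ) (h : i + d < 2*n+1), t + d ≤ r →
      u (t + d) ⟨i, by omega⟩ = u t ⟨i + d, h⟩ := by
  intro d
  induction d with
  | zero => intro t i h _; rfl
  | succ d ih =>
    intro t i h htd
    have h1 : t + (d + 1) = (t + 1) + d := by omega
    have h2 : (i : ℕ) + d < 2*n+1 := by omega
    have h3 : (t+1) + d ≤ r := by omega
    calc u (t + (d+1)) ⟨i, by omega⟩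
        = u ((t+1) + d) ⟨i, by omega⟩ := by rw [h1]
      _ = u (t+1) ⟨i + d, h2⟩ := ih (t+1) i h2 h3
      _ = u t ⟨i + d + 1, by omega⟩ := hc t (by omega) (i + d) (by omega)
      _ = u t ⟨i + (d+1), h⟩ := by congr 1
  
lemma rep_eq {n r : ℕ} {u : ℕ → Fin (2*n+1) → A}
    (hc : ∀ t < r, Compat n (u t) (u (t+1)))
    {t t' i i' : ℕ} (ht : t ≤ r) (ht' : t' ≤ r) (hi : i < 2*n+1) (hi' : i' < 2*n+1)
    (hpos : t + i = t' + i') : u t ⟨i, hi⟩ = u t' ⟨i', hi'⟩ := by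
  rcases le_total t t' with h | h
  · obtain ⟨d, rfl⟩ : ∃ d, t' = t + d := ⟨t' - t, by omega⟩
    have : i = i' + d := by omega
    subst this
    exact (chain_eq hc d t i' hi ht').symm
  · obtain ⟨d, rfl⟩ : ∃ d, t = t' + d := ⟨t - t', by omega⟩
    have : i' = i + d := by omega
    subst this
    exact chain_eq hc d t' i hi' ht

noncomputable def bfun (n : ℕ) (k : ℤ) (r : ℕ) (u : ℕ → Fin (2*n+1) → A) : ℤ → A :=
  fun j => u (min r (j - (k - n)).toNat)
    ⟨min ((j - (k - n)).toNat - min r (j - (k - n)).toNat) (2*n), by omega⟩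

lemma bfun_spec {n r : ℕ} {k : ℤ} {u : ℕ → Fin (2*n+1) → A}
    (hc : ∀ t < r, Compat n (u t) (u (t+1))) :
    ∀ t ≤ r, ∀ i : Fin (2*n+1), bfun n k r u (k + t + i - n) = u t i := by
  intro t ht i
  have hiv : (i : ℕ) < 2*n+1 := i.isLt
  have htn : ((k + t + i - n) - (k - n)).toNat = t + (i : ℕ) := by omega
  unfold bfun
  exact rep_eq hc (min_le_left _ _) ht (by omega) i.isLt (by omega)

lemma cylinder_eq {n r : ℕ} {k : ℤ} {u : ℕ → Fin (2*n+1) → A}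
    (hc : ∀ t < r, Compat n (u t) (u (t+1))) :
    {ω : ℤ → A | ∀ t : ℕ, t ≤ r → wndAt n (k + t) ω = u t}
      = {ω | ∀ j ∈ Finset.Icc (k - n) (k + n + r), ω j = bfun n k r u j} := by
  ext ω
  simp only [Set.mem_setOf_eq]
  constructor
  · intro hω j hj
    rw [Finset.mem_Icc] at hj
    set t : ℕ := min r (j - (k - n)).toNat with hT
    set i : ℕ := (j - (k - n)).toNat - t with hI
    have hjk : 0 ≤ j - (k - n) := by omega
    have hjk2 : (j - (k-n)).toNat = (j - (k-n)) := Int.toNat_of_nonneg hjk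
    have hub : (j - (k-n)).toNat ≤ 2*n + r := by omega
    have ht : t ≤ r := min_le_left _ _
    have hi : i < 2*n+1 := by omega
    have hpos : j = k + t + i - n := by
      have : (t + i : ℕ) = (j - (k-n)).toNat := by omega
      omega
    have h1 : ω j = wndAt n (k + t) ω ⟨i, hi⟩ := by
      simp only [wndAt]
      congr 1 <;> omega
    rw [h1, hω t ht]
    rw [hpos]
    exact (bfun_spec hc t ht ⟨i, hi⟩).symm
  · intro hω t ht
    funext i
    have hj : k + t + i - n ∈ Finset.Icc (k - n) (k + n + r) := by
      rw [Finset.mem_Icc]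
      have := i.isLt
      omega
    have : wndAt n (k + t) ω i = ω (k + t + i - n) := rfl
    rw [this, hω _ hj, bfun_spec hc t ht i]

lemma Icc_insert (c : ℤ) (m : ℕ) :
    Finset.Icc c (c + ((m+1 : ℕ) : ℤ)) = insert (c + ((m+1 : ℕ) : ℤ)) (Finset.Icc c (c + (m : ℕ))) := by
  ext x
  simp only [Finset.mem_Icc, Finset.mem_insert]
  omega

lemma prod_Icc_zt (c : ℤ) (m : ℕ) (f : ℤ → ℝ≥0∞) :
    ∏ j ∈ Finset.Icc c (c + m), f j = ∏ i ∈ Finset.range (m+1), f (c + i) := by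
  induction m with
  | zero => simp
  | succ m ih =>
    rw [Icc_insert c m, Finset.prod_insert (by rw [Finset.mem_Icc]; omega),
      Finset.prod_range_succ, ih, mul_comm]

lemma prod_Icc_fin (c : ℤ) (m : ℕ) (f : ℤ → ℝ≥0∞) :
    ∏ j ∈ Finset.Icc c (c + m), f j = ∏ i : Fin (m+1), f (c + (i : ℕ)) := by
  rw [prod_Icc_zt, Fin.prod_univ_eq_prod_range (fun j : ℕ => f (c + j))]

lemma prod_eq {p' : A → ℝ≥0∞} {n : ℕ} {k : ℤ} {u : ℕ → Fin (2*n+1) → A} {B : ℤ → A} :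
    ∀ r : ℕ, (∀ t ≤ r, ∀ i : Fin (2*n+1), B (k + t + i - n) = u t i) →
    ∏ j ∈ Finset.Icc (k - n) (k + n + r), p' (B j)
      = (∏ i : Fin (2*n+1), p' (u 0 i)) * ∏ t ∈ Finset.range r, p' (u (t+1) ⟨2*n, by omega⟩) := by
  intro r
  induction r with
  | zero =>
    intro hB
    rw [Finset.prod_range_zero, mul_one]
    have h1 : (k : ℤ) + n + ((0:ℕ) : ℤ) = (k - n) + ((2*n : ℕ) : ℤ) := by push_cast; ring
    rw [h1, prod_Icc_fin (k - n) (2*n)]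
    refine Finset.prod_congr rfl fun i _ => ?_
    have h2 : k - (n:ℤ) + (i:ℕ) = k + ((0:ℕ):ℤ) + ((i : Fin (2*n+1)) : ℕ) - n := by
      push_cast; ring
    rw [h2, hB 0 le_rfl i]
  | succ r ih =>
    intro hB
    have h1 : (k : ℤ) + n + ((r+1 : ℕ) : ℤ) = (k - n) + (((2*n + r) + 1 : ℕ) : ℤ) := by
      push_cast; ring
    rw [h1, Icc_insert (k - n) (2*n + r),
      Finset.prod_insert (by rw [Finset.mem_Icc]; omega)]
    have h2 : (k : ℤ) - n + (((2*n+r)+1 : ℕ) : ℤ) = k + ((r+1 : ℕ) : ℤ)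
        + ((⟨2*n, by omega⟩ : Fin (2*n+1)) : ℕ) - n := by
      simp only [Fin.val_mk]
      push_cast; ring
    rw [h2, hB (r+1) le_rfl ⟨2*n, by omega⟩]
    have h3 : (k : ℤ) - n + ((2*n + r : ℕ) : ℤ) = k + n + (r : ℕ) := by push_cast; ring
    rw [h3, ih (fun t ht i => hB t (by omega) i)]
    rw [Finset.prod_range_succ]
    ring

end Words



section Sums
variable {A : Type*} [Fintype A] [DecidableEq A]
set_option linter.unusedSectionVars false

open scoped Classical in
noncomputable def transw (n : ℕ) (p' : A → ℝ≥0∞) (u u' : Fin (2*n+1) → A) : ℝ≥0∞ :=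
  if Compat n u u' then p' (u' ⟨2*n, by omega⟩) else 0

noncomputable def statw (n : ℕ) (p' : A → ℝ≥0∞) (u : Fin (2*n+1) → A) : ℝ≥0∞ :=
  ∏ i, p' (u i)

/-- successor words -/
def sucw (n : ℕ) (u : Fin (2*n+1) → A) (s : A) : Fin (2*n+1) → A :=
  fun i => if h : (i : ℕ) < 2*n then u ⟨(i:ℕ)+1, by omega⟩ else s

lemma compat_sucw (n : ℕ) (u : Fin (2*n+1) → A) (s : A) : Compat n u (sucw n u s) := by
  intro j h
  simp only [sucw]
  rw [dif_pos (show ((⟨j, by omega⟩ : Fin (2*n+1)) : ℕ) < 2*n by simpa using by omega)]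

lemma sucw_last (n : ℕ) (u : Fin (2*n+1) → A) (s : A) : sucw n u s ⟨2*n, by omega⟩ = s := by
  simp [sucw]

lemma sucw_inj (n : ℕ) (u : Fin (2*n+1) → A) : Function.Injective (sucw n u) := by
  intro s s' h
  have := congrFun h ⟨2*n, by omega⟩
  simpa [sucw] using this

lemma eq_sucw_of_compat {n : ℕ} {u u' : Fin (2*n+1) → A} (h : Compat n u u') :
    u' = sucw n u (u' ⟨2*n, by omega⟩) := by
  funext i
  by_cases hi : (i : ℕ) < 2*n
  · simp only [sucw]
    rw [dif_pos hi]
    exact h (i : ℕ) (by omega)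
  · have hieq : i = ⟨2*n, by omega⟩ := by
      apply Fin.ext; simp only [Fin.val_mk]; omega
    rw [hieq]
    rw [sucw_last]

lemma row_sum (n : ℕ) (p' : A → ℝ≥0∞) (u : Fin (2*n+1) → A) :
    ∑ u' : Fin (2*n+1) → A, transw n p' u u' = ∑ s : A, p' s := by
  classical
  have h0 : ∀ u' ∈ Finset.univ, u' ∉ Finset.univ.image (sucw n u) → transw n p' u u' = 0 := by
    intro u' _ hu'
    rw [transw, if_neg]
    intro hc
    exact hu' (Finset.mem_image.mpr ⟨_, Finset.mem_univ _, (eq_sucw_of_compat hc).symm⟩)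
  rw [← Finset.sum_subset (Finset.subset_univ (Finset.univ.image (sucw n u))) h0]
  rw [Finset.sum_image (fun a _ b _ h => sucw_inj n u h)]
  refine Finset.sum_congr rfl fun s _ => ?_
  rw [transw, if_pos (compat_sucw n u s), sucw_last]

/-- predecessor words -/
def prew (n : ℕ) (u' : Fin (2*n+1) → A) (s : A) : Fin (2*n+1) → A :=
  fun i => if h : 0 < (i : ℕ) then u' ⟨(i:ℕ)-1, by omega⟩ else s

lemma compat_prew (n : ℕ) (u' : Fin (2*n+1) → A) (s : A) : Compat n (prew n u' s) u' := by
  intro j h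
  simp only [prew]
  rw [dif_pos (show 0 < ((⟨j+1, h⟩ : Fin (2*n+1)) : ℕ) by simp)]
  congr 1

lemma prew_zero (n : ℕ) (u' : Fin (2*n+1) → A) (s : A) : prew n u' s ⟨0, by omega⟩ = s := by
  simp [prew]

lemma prew_inj (n : ℕ) (u' : Fin (2*n+1) → A) : Function.Injective (prew n u') := by
  intro s s' h
  have := congrFun h ⟨0, by omega⟩
  simpa [prew] using this

lemma eq_prew_of_compat {n : ℕ} {u u' : Fin (2*n+1) → A} (h : Compat n u u') :
    u = prew n u' (u ⟨0, by omega⟩) := by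
  funext i
  by_cases hi : 0 < (i : ℕ)
  · simp only [prew]
    rw [dif_pos hi]
    rw [h ((i:ℕ)-1) (by omega)]
    congr 1
    apply Fin.ext
    simp only [Fin.val_mk]
    omega
  · have hieq : i = ⟨0, by omega⟩ := by
      apply Fin.ext; simp only [Fin.val_mk]; omega
    rw [hieq, prew_zero]

lemma statw_prew (n : ℕ) (p' : A → ℝ≥0∞) (u' : Fin (2*n+1) → A) (s : A) :
    statw n p' (prew n u' s) = p' s * ∏ i : Fin (2*n), p' (u' i.castSucc) := by
  rw [statw, Fin.prod_univ_succ (fun i : Fin (2*n+1) => p' (prew n u' s i))]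
  have h0 : prew n u' s (0 : Fin (2*n+1)) = s := prew_zero n u' s
  rw [h0]
  congr 1

lemma statw_last (n : ℕ) (p' : A → ℝ≥0∞) (u' : Fin (2*n+1) → A) :
    statw n p' u' = (∏ i : Fin (2*n), p' (u' i.castSucc)) * p' (u' ⟨2*n, by omega⟩) := by
  rw [statw, Fin.prod_univ_castSucc (fun i : Fin (2*n+1) => p' (u' i))]
  rfl

lemma stat_sum (n : ℕ) (p' : A → ℝ≥0∞) (hsum : ∑ s : A, p' s = 1) (u' : Fin (2*n+1) → A) :
    ∑ u : Fin (2*n+1) → A, statw n p' u * transw n p' u u' = statw n p' u' := by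
  classical
  have h0 : ∀ u ∈ Finset.univ, u ∉ Finset.univ.image (prew n u') →
      statw n p' u * transw n p' u u' = 0 := by
    intro u _ hu
    rw [transw, if_neg, mul_zero]
    intro hc
    exact hu (Finset.mem_image.mpr ⟨_, Finset.mem_univ _, (eq_prew_of_compat hc).symm⟩)
  rw [← Finset.sum_subset (Finset.subset_univ (Finset.univ.image (prew n u'))) h0]
  rw [Finset.sum_image (fun a _ b _ h => prew_inj n u' h)]
  have : ∀ s : A, statw n p' (prew n u' s) * transw n p' (prew n u' s) u'
      = p' s * statw n p' u' := by
    intro s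
    rw [transw, if_pos (compat_prew n u' s), statw_prew, statw_last]
    ring
  rw [Finset.sum_congr rfl fun s _ => this s, ← Finset.sum_mul, hsum, one_mul]

lemma sum_statw (n : ℕ) (p' : A → ℝ≥0∞) (hsum : ∑ s : A, p' s = 1) :
    ∑ u : Fin (2*n+1) → A, statw n p' u = 1 := by
  classical
  have h := Finset.prod_univ_sum (fun _ : Fin (2*n+1) => (Finset.univ : Finset A))
    (fun _ s => p' s)
  rw [Fintype.piFinset_univ] at h
  simp only [statw]
  rw [← h, Finset.prod_congr rfl fun _ _ => hsum, Finset.prod_const, one_pow]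

end Sums

lemma pow_ne_zero_of_chain {l : ℕ} (P : Matrix (Fin l) (Fin l) ℝ≥0∞) :
    ∀ (k : ℕ) (c : ℕ → Fin l), (∀ t < k, P (c t) (c (t+1)) ≠ 0) → (P ^ k) (c 0) (c k) ≠ 0 := by
  intro k
  induction k with
  | zero => intro c _; simp [Matrix.one_apply]
  | succ k ih =>
    intro c hc
    rw [pow_succ, Matrix.mul_apply]
    intro h0
    rw [Finset.sum_eq_zero_iff] at h0
    have := h0 (c k) (Finset.mem_univ _)
    rcases mul_eq_zero.mp this with h | h
    · exact ih c (fun t ht => hc t (by omega)) h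
    · exact hc k (by omega) h



section Algebra
variable {A : Type*} [Fintype A] [MeasurableSpace A] [MeasurableSingletonClass A]
set_option linter.unusedSectionVars false

lemma measurable_wndAt (n : ℕ) (t : ℤ) : Measurable (fun ω : ℤ → A => wndAt n t ω) :=
  measurable_pi_lambda _ (fun _ => measurable_pi_apply _)

def cylAlg (A : Type*) : Set (Set (ℤ → A)) :=
  {C | ∃ (n : ℕ) (S : Set (Fin (2*n+1) → A)), C = (fun ω => wndAt n 0 ω) ⁻¹' S}

lemma cyl_lift {n m : ℕ} (hnm : n ≤ m) (S : Set (Fin (2*n+1) → A)) :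
    ∃ S' : Set (Fin (2*m+1) → A),
      (fun ω : ℤ → A => wndAt n 0 ω) ⁻¹' S = (fun ω => wndAt m 0 ω) ⁻¹' S' := by
  refine ⟨{u | (fun i : Fin (2*n+1) => u ⟨(i:ℕ) + (m - n), by omega⟩) ∈ S}, ?_⟩
  ext ω
  simp only [Set.mem_preimage, Set.mem_setOf_eq]
  have : (fun i : Fin (2*n+1) => wndAt m 0 ω ⟨(i:ℕ) + (m - n), by omega⟩) = wndAt n 0 ω := by
    funext i
    simp only [wndAt]
    congr 1
    omega
  rw [this]

lemma isSetAlgebra_cylAlg : MeasureTheory.IsSetAlgebra (cylAlg A) := by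
  constructor
  · exact ⟨0, ∅, by simp⟩
  · rintro s ⟨n, S, rfl⟩
    exact ⟨n, Sᶜ, by rw [Set.preimage_compl]⟩
  · rintro s t ⟨n, S, rfl⟩ ⟨m, S', rfl⟩
    obtain ⟨S2, hS2⟩ := cyl_lift (le_max_left n m) S
    obtain ⟨S2', hS2'⟩ := cyl_lift (le_max_right n m) S'
    exact ⟨max n m, S2 ∪ S2', by rw [Set.preimage_union, hS2, hS2']⟩

lemma pi_eq_generateFrom_cylAlg :
    (MeasurableSpace.pi : MeasurableSpace (ℤ → A)) = MeasurableSpace.generateFrom (cylAlg A) := by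
  refine le_antisymm ?_ ?_
  · rw [MeasurableSpace.pi]
    refine iSup_le fun t => ?_
    intro s hs
    obtain ⟨s', hs', rfl⟩ := hs
    refine MeasurableSpace.measurableSet_generateFrom ?_
    refine ⟨t.natAbs, {u | u ⟨(t + t.natAbs).toNat, by omega⟩ ∈ s'}, ?_⟩
    ext ω
    simp only [Set.mem_preimage, Set.mem_setOf_eq]
    have : wndAt t.natAbs 0 ω ⟨(t + t.natAbs).toNat, by omega⟩ = ω t := by
      simp only [wndAt]
      congr 1
      omega
    rw [this]
  · refine MeasurableSpace.generateFrom_le ?_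
    rintro s ⟨n, S, rfl⟩
    exact measurable_wndAt n 0 (S.toFinite.measurableSet)

lemma cyl_approx (ν : Measure (ℤ → A)) [IsProbabilityMeasure ν]
    {B : Set (ℤ → A)} (hB : MeasurableSet B) {δ : ℝ} (hδ : 0 < δ) :
    ∃ (n : ℕ) (S : Set (Fin (2*n+1) → A)),
      ν (symmDiff B ((fun ω => wndAt n 0 ω) ⁻¹' S)) < ENNReal.ofReal δ := by
  have hd := Measure.MeasureDense.of_generateFrom_isSetAlgebra_finite
    (μ := ν) isSetAlgebra_cylAlg pi_eq_generateFrom_cylAlg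
  obtain ⟨t, ⟨n, S, rfl⟩, ht⟩ := hd.approx B hB (measure_ne_top ν B) δ hδ
  exact ⟨n, S, ht⟩

end Algebra



lemma measurable_cylSet {A : Type*} [MeasurableSpace A] [MeasurableSingletonClass A]
    (F : Finset ℤ) (a : ℤ → A) : MeasurableSet {ω : ℤ → A | ∀ i ∈ F, ω i = a i} := by
  have h : {ω : ℤ → A | ∀ i ∈ F, ω i = a i} = ⋂ i ∈ F, (fun ω : ℤ → A => ω i) ⁻¹' {a i} := by
    ext ω; simp
  rw [h]
  exact MeasurableSet.biInter F.countable_toSet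
    (fun i _ => (measurable_pi_apply i) (measurableSet_singleton _))

lemma exists_relabel {N : ℕ} (p : Fin N → ℝ≥0∞) (hsum : ∑ k, p k = 1) :
    ∃ (N' : ℕ) (p' : Fin N' → ℝ≥0∞) (proj : Fin N → Fin N') (lift : Fin N' → Fin N),
      0 < N' ∧ (∀ s, p' s ≠ 0) ∧ (∑ s, p' s = 1) ∧
      (∀ s, proj (lift s) = s) ∧ (∀ j, p j ≠ 0 → lift (proj j) = j) ∧
      (∀ s, p (lift s) = p' s) := by
  classical
  have hex : ∃ j, p j ≠ 0 := by
    by_contra h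
    push_neg at h
    rw [Finset.sum_congr rfl (fun j _ => h j), Finset.sum_const] at hsum
    simp at hsum
  obtain ⟨j₀, hj₀⟩ := hex
  set s : Finset (Fin N) := Finset.univ.filter (fun j => p j ≠ 0) with hs
  have hj₀s : j₀ ∈ s := by simp [hs, hj₀]
  set e : {x // x ∈ s} ≃ Fin s.card := s.equivFin with he
  refine ⟨s.card, fun i => p (e.symm i).val,
    fun j => if h : j ∈ s then e ⟨j, h⟩ else e ⟨j₀, hj₀s⟩,
    fun i => (e.symm i).val, ?_, ?_, ?_, ?_, ?_, ?_⟩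
  · rw [Finset.card_pos]
    exact ⟨j₀, hj₀s⟩
  · intro i
    show p (e.symm i).val ≠ 0
    have h1 : (e.symm i).val ∈ s := (e.symm i).property
    simp only [hs, Finset.mem_filter] at h1
    exact h1.2
  · show ∑ i : Fin s.card, p (e.symm i).val = 1
    rw [Equiv.sum_comp e.symm (fun x => p x.val)]
    rw [Finset.sum_coe_sort s (fun x => p x)]
    rw [hs, Finset.sum_filter_ne_zero]
    exact hsum
  · intro i
    show (if h : (e.symm i).val ∈ s then e ⟨(e.symm i).val, h⟩ else e ⟨j₀, hj₀s⟩) = i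
    rw [dif_pos (e.symm i).property]
    simp
  · intro j hj
    have hjs : j ∈ s := by simp [hs, hj]
    show ((e.symm (if h : j ∈ s then e ⟨j, h⟩ else e ⟨j₀, hj₀s⟩) : {x // x ∈ s}) : Fin N) = j
    rw [dif_pos hjs]
    simp
  · intro i; rfl

lemma relabel_iso {N N' : ℕ} (p : Fin N → ℝ≥0∞) (p' : Fin N' → ℝ≥0∞)
    (proj : Fin N → Fin N') (lift : Fin N' → Fin N)
    (ν₀ : Measure (ℤ → Fin N)) [IsProbabilityMeasure ν₀]
    (hcyl : ∀ (F : Finset ℤ) (a : ℤ → Fin N),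
      ν₀ {ω | ∀ i ∈ F, ω i = a i} = ∏ i ∈ F, p (a i))
    (hp'0 : ∀ s, p' s ≠ 0)
    (hpl : ∀ s, proj (lift s) = s) (hlp : ∀ j, p j ≠ 0 → lift (proj j) = j)
    (hp' : ∀ s, p (lift s) = p' s) :
    ∃ ν₁ : Measure (ℤ → Fin N'), IsProbabilityMeasure ν₁ ∧
      (∀ (F : Finset ℤ) (a : ℤ → Fin N'),
        ν₁ {ω | ∀ i ∈ F, ω i = a i} = ∏ i ∈ F, p' (a i)) ∧
      IsIso ν₀ ν₁ (fun ω t => ω (t + 1)) (fun ω t => ω (t + 1)) (fun ω t => proj (ω t)) := by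
  classical
  set pm : (ℤ → Fin N) → (ℤ → Fin N') := fun ω t => proj (ω t) with hpm
  set lm : (ℤ → Fin N') → (ℤ → Fin N) := fun x t => lift (x t) with hlm
  have hpmm : Measurable pm :=
    measurable_pi_lambda _ (fun t => (measurable_of_countable proj).comp (measurable_pi_apply t))
  have hlmm : Measurable lm :=
    measurable_pi_lambda _ (fun t => (measurable_of_countable lift).comp (measurable_pi_apply t))
  set G : Set (ℤ → Fin N) := {ω | ∀ t, p (ω t) ≠ 0} with hG
  have hGm : MeasurableSet G := by
    have : G = ⋂ (t : ℤ), (fun ω : ℤ → Fin N => ω t) ⁻¹' {j | p j ≠ 0} := by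
      ext ω; simp [hG]
    rw [this]
    exact MeasurableSet.iInter fun t =>
      (measurable_pi_apply t) (Set.Finite.measurableSet (Set.toFinite _))
  have hGc : ν₀ Gᶜ = 0 := by
    have hsub : Gᶜ ⊆ ⋃ (t : ℤ) (j : Fin N) (_ : p j = 0), {ω : ℤ → Fin N | ω t = j} := by
      intro ω hω
      simp only [hG, Set.mem_compl_iff, Set.mem_setOf_eq, not_forall, not_not] at hω
      obtain ⟨t, ht⟩ := hω
      simp only [Set.mem_iUnion]
      exact ⟨t, ω t, ht, rfl⟩
    refine measure_mono_null hsub ?_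
    refine measure_iUnion_null fun t => measure_iUnion_null fun j => ?_
    by_cases hj : p j = 0
    · have h1 : (⋃ (_ : p j = 0), {ω : ℤ → Fin N | ω t = j}) = {ω | ω t = j} := by
        simp [hj]
      rw [h1]
      have h2 : {ω : ℤ → Fin N | ω t = j} = {ω | ∀ i ∈ ({t} : Finset ℤ), ω i = (fun _ => j) i} := by
        ext ω; simp
      rw [h2, hcyl]
      simp [hj]
    · simp [hj]
  have hlpm : ∀ ω ∈ G, lm (pm ω) = ω := by
    intro ω hω
    funext t
    exact hlp _ (hω t)
  have hpml : ∀ x, pm (lm x) = x := by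
    intro x; funext t; exact hpl _
  have hlmG : ∀ x, lm x ∈ G := by
    intro x t
    rw [hlm]
    simp only
    rw [hp']
    exact hp'0 _
  refine ⟨Measure.map pm ν₀, Measure.isProbabilityMeasure_map hpmm.aemeasurable, ?_, ?_⟩
  · intro F a
    rw [Measure.map_apply hpmm (measurable_cylSet F a)]
    have h1 : pm ⁻¹' {ω | ∀ i ∈ F, ω i = a i} = {ω | ∀ i ∈ F, proj (ω i) = a i} := rfl
    have h2 : ν₀ {ω | ∀ i ∈ F, proj (ω i) = a i}
        = ν₀ {ω | ∀ i ∈ F, ω i = lm a i} := by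
      apply measure_congr
      rw [Filter.eventuallyEq_set]
      have : ∀ ω ∈ G, (ω ∈ {ω | ∀ i ∈ F, proj (ω i) = a i}
          ↔ ω ∈ {ω | ∀ i ∈ F, ω i = lm a i}) := by
        intro ω hω
        simp only [Set.mem_setOf_eq]
        constructor
        · intro h i hi
          have := congrArg lift (h i hi)
          rwa [hlp _ (hω i)] at this
        · intro h i hi
          rw [h i hi]
          exact hpl _
      have hGae : ∀ᵐ ω ∂ν₀, ω ∈ G := by
        rw [MeasureTheory.ae_iff]
        exact hGc
      filter_upwards [hGae] with ω hω using this ω hω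
    rw [h1, h2, hcyl F (lm a)]
    exact Finset.prod_congr rfl fun i _ => hp' _
  · refine ⟨G, Set.univ, hGm, MeasurableSet.univ, hGc, by simp, ?_, ?_, ?_, ?_, ?_, ?_⟩
    · intro ω hω t
      exact hω (t + 1)
    · exact fun x _ => Set.mem_univ _
    · refine ⟨fun ω _ => Set.mem_univ _, ?_, ?_⟩
      · intro ω hω ω' hω' h
        rw [← hlpm ω hω, ← hlpm ω' hω', h]
      · intro x _
        exact ⟨lm x, hlmG x, hpml x⟩
    · intro A hA hAG
      have himg : pm '' A = lm ⁻¹' A := by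
        ext x
        constructor
        · rintro ⟨ω, hω, rfl⟩
          rw [Set.mem_preimage, hlpm ω (hAG hω)]
          exact hω
        · intro hx
          exact ⟨lm x, hx, hpml x⟩
      rw [himg]
      refine ⟨hlmm hA, ?_⟩
      rw [Measure.map_apply hpmm (hlmm hA)]
      apply measure_congr
      rw [Filter.eventuallyEq_set]
      have hGae : ∀ᵐ ω ∂ν₀, ω ∈ G := by
        rw [MeasureTheory.ae_iff]
        exact hGc
      filter_upwards [hGae] with ω hω
      simp only [Set.mem_preimage]
      rw [hlpm ω hω]
    · intro B hB _
      exact hGm.inter (hpmm hB)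
    · intro ω _
      rfl

section Block
variable {A : Type*} [Fintype A] [DecidableEq A] [MeasurableSpace A] [MeasurableSingletonClass A]

lemma chain_eqZ {n : ℕ} {u : ℤ → Fin (2*n+1) → A}
    (hc : ∀ t : ℤ, Compat n (u t) (u (t+1))) :
    ∀ (d : ℕ) (t : ℤ) (i : ℕ) (h : i + d < 2*n+1),
      u (t + (d : ℕ)) ⟨i, by omega⟩ = u t ⟨i + d, h⟩ := by
  intro d
  induction d with
  | zero =>
    intro t i h
    have h1 : t + ((0:ℕ) : ℤ) = t := by push_cast; ring
    rw [h1]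
    congr 1
  | succ d ih =>
    intro t i h
    have h1 : t + ((d+1 : ℕ) : ℤ) = (t + 1) + (d : ℕ) := by push_cast; ring
    rw [h1]
    have h2 : (i : ℕ) + d < 2*n+1 := by omega
    rw [ih (t+1) i h2]
    have h3 := hc t (i + d) (by omega)
    rw [h3]
    congr 1

lemma rep_eqZ {n : ℕ} {u : ℤ → Fin (2*n+1) → A}
    (hc : ∀ t : ℤ, Compat n (u t) (u (t+1)))
    {t t' : ℤ} {i i' : ℕ} (hi : i < 2*n+1) (hi' : i' < 2*n+1)
    (hpos : t + i = t' + i') : u t ⟨i, hi⟩ = u t' ⟨i', hi'⟩ := by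
  rcases le_total t t' with h | h
  · obtain ⟨d, hd⟩ : ∃ d : ℕ, t' = t + d := ⟨(t' - t).toNat, by omega⟩
    subst hd
    have : i = i' + d := by omega
    subst this
    exact (chain_eqZ hc d t i' hi).symm
  · obtain ⟨d, hd⟩ : ∃ d : ℕ, t = t' + d := ⟨(t - t').toNat, by omega⟩
    subst hd
    have : i' = i + d := by omega
    subst this
    exact chain_eqZ hc d t' i hi'

lemma block_iso (n l : ℕ) (eW : (Fin (2*n+1) → A) ≃ Fin l) (p' : A → ℝ≥0∞)
    (ν₁ : Measure (ℤ → A)) [IsProbabilityMeasure ν₁]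
    (hcyl : ∀ (F : Finset ℤ) (a : ℤ → A),
      ν₁ {ω | ∀ i ∈ F, ω i = a i} = ∏ i ∈ F, p' (a i)) :
    ∃ ν : Measure (ℤ → Fin l), IsProbabilityMeasure ν ∧
      (∀ (k : ℤ) (r : ℕ) (a : ℕ → Fin l),
        ν {x | ∀ t : ℕ, t ≤ r → x (k + t) = a t}
          = statw n p' (eW.symm (a 0))
            * ∏ t ∈ Finset.range r, transw n p' (eW.symm (a t)) (eW.symm (a (t+1)))) ∧
      IsIso ν₁ ν (fun ω t => ω (t + 1)) (fun ω t => ω (t + 1))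
        (fun ω t => eW (wndAt n t ω)) := by
  classical
  set ρ : (ℤ → A) → (ℤ → Fin l) := fun ω t => eW (wndAt n t ω) with hρ
  set g : (ℤ → Fin l) → (ℤ → A) := fun x s => eW.symm (x s) ⟨n, by omega⟩ with hg
  have hρm : Measurable ρ :=
    measurable_pi_lambda _ (fun t => (measurable_of_countable eW).comp (measurable_wndAt n t))
  have hgm : Measurable g :=
    measurable_pi_lambda _ (fun s =>
      ((measurable_of_countable (fun v : Fin l => eW.symm v ⟨n, by omega⟩)).comp
        (measurable_pi_apply s)))
  have hgρ : ∀ ω, g (ρ ω) = ω := by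
    intro ω
    funext s
    show eW.symm (eW (wndAt n s ω)) ⟨n, by omega⟩ = ω s
    rw [Equiv.symm_apply_apply]
    show ω (s + ((⟨n, by omega⟩ : Fin (2*n+1)) : ℕ) - n) = ω s
    congr 1
    simp only [Fin.val_mk]
    ring
  have hρinj : Function.Injective ρ := by
    intro ω ω' h
    rw [← hgρ ω, ← hgρ ω', h]
  set Ωh : Set (ℤ → Fin l) :=
    {x | ∀ t : ℤ, Compat n (eW.symm (x t)) (eW.symm (x (t+1)))} with hΩh
  have hρΩh : ∀ ω, ρ ω ∈ Ωh := by
    intro ω t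
    show Compat n (eW.symm (eW (wndAt n t ω))) (eW.symm (eW (wndAt n (t+1) ω)))
    rw [Equiv.symm_apply_apply, Equiv.symm_apply_apply]
    exact compat_wndAt n t ω
  have hρg : ∀ x ∈ Ωh, ρ (g x) = x := by
    intro x hx
    funext t
    show eW (wndAt n t (g x)) = x t
    have hwnd : wndAt n t (g x) = eW.symm (x t) := by
      funext i
      show eW.symm (x (t + (i:ℕ) - n)) ⟨n, by omega⟩ = eW.symm (x t) i
      have := rep_eqZ (u := fun t => eW.symm (x t)) hx
        (t := t + (i:ℕ) - n) (t' := t) (i := n) (i' := (i:ℕ)) (by omega) i.isLt (by ring)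
      exact this
    rw [hwnd, Equiv.apply_symm_apply]
  have hΩhm : MeasurableSet Ωh := by
    have : Ωh = ⋂ (t : ℤ),
        (fun x : ℤ → Fin l => (x t, x (t+1))) ⁻¹'
          {q : Fin l × Fin l | Compat n (eW.symm q.1) (eW.symm q.2)} := by
      ext x; simp [hΩh]
    rw [this]
    refine MeasurableSet.iInter fun t => ?_
    exact ((measurable_pi_apply t).prodMk (measurable_pi_apply (t+1)))
      (Set.Finite.measurableSet (Set.toFinite _))
  refine ⟨Measure.map ρ ν₁, Measure.isProbabilityMeasure_map hρm.aemeasurable, ?_, ?_⟩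
  · intro k r a
    have hDm : MeasurableSet {x : ℤ → Fin l | ∀ t : ℕ, t ≤ r → x (k + t) = a t} := by
      have : {x : ℤ → Fin l | ∀ t : ℕ, t ≤ r → x (k + t) = a t}
          = ⋂ (t : ℕ) (_ : t ≤ r), (fun x : ℤ → Fin l => x (k + t)) ⁻¹' {a t} := by
        ext x; simp
      rw [this]
      exact MeasurableSet.iInter fun t => MeasurableSet.iInter fun _ =>
        (measurable_pi_apply _) (measurableSet_singleton _)
    rw [Measure.map_apply hρm hDm]
    have hpre : ρ ⁻¹' {x : ℤ → Fin l | ∀ t : ℕ, t ≤ r → x (k + t) = a t}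
        = {ω | ∀ t : ℕ, t ≤ r → wndAt n (k + t) ω = eW.symm (a t)} := by
      ext ω
      simp only [Set.mem_preimage, Set.mem_setOf_eq]
      constructor
      · intro h t ht
        rw [← h t ht]
        show wndAt n (k + t) ω = eW.symm (eW (wndAt n (k + t) ω))
        rw [Equiv.symm_apply_apply]
      · intro h t ht
        show eW (wndAt n (k + t) ω) = a t
        rw [h t ht, Equiv.apply_symm_apply]
    rw [hpre]
    by_cases hcomp : ∀ t < r, Compat n (eW.symm (a t)) (eW.symm (a (t+1)))
    · rw [cylinder_eq (k := k) hcomp]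
      rw [hcyl (Finset.Icc (k - n) (k + n + r)) (bfun n k r (fun t => eW.symm (a t)))]
      rw [prod_eq r (bfun_spec hcomp)]
      congr 1
      refine Finset.prod_congr rfl fun t ht => ?_
      rw [transw, if_pos (hcomp t (Finset.mem_range.mp ht))]
    · push_neg at hcomp
      obtain ⟨t₀, ht₀, hnc⟩ := hcomp
      have hempty : {ω : ℤ → A | ∀ t : ℕ, t ≤ r → wndAt n (k + t) ω = eW.symm (a t)} = ∅ := by
        ext ω
        simp only [Set.mem_setOf_eq, Set.mem_empty_iff_false, iff_false]
        intro hω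
        apply hnc
        have h1 := hω t₀ (by omega)
        have h2 := hω (t₀+1) (by omega)
        have h3 : (k : ℤ) + ((t₀+1 : ℕ) : ℤ) = (k + t₀) + 1 := by push_cast; ring
        rw [h3] at h2
        rw [← h1, ← h2]
        exact compat_wndAt n (k + t₀) ω
      rw [hempty, measure_empty]
      have : transw n p' (eW.symm (a t₀)) (eW.symm (a (t₀+1))) = 0 := by
        rw [transw, if_neg hnc]
      rw [Finset.prod_eq_zero (Finset.mem_range.mpr ht₀) this, mul_zero]
  · refine ⟨Set.univ, Ωh, MeasurableSet.univ, hΩhm, by simp, ?_, ?_, ?_, ?_, ?_, ?_, ?_⟩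
    · rw [Measure.map_apply hρm hΩhm.compl]
      have : ρ ⁻¹' Ωhᶜ = ∅ := by
        ext ω
        simp only [Set.mem_preimage, Set.mem_compl_iff, Set.mem_empty_iff_false, iff_false,
          not_not]
        exact hρΩh ω
      rw [this, measure_empty]
    · exact fun ω _ => Set.mem_univ _
    · intro x hx t
      exact hx (t+1)
    · refine ⟨fun ω _ => hρΩh ω, fun ω _ ω' _ h => hρinj h, ?_⟩
      intro x hx
      exact ⟨g x, Set.mem_univ _, hρg x hx⟩
    · intro B hB _
      have himg : ρ '' B = Ωh ∩ g ⁻¹' B := by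
        ext x
        constructor
        · rintro ⟨ω, hω, rfl⟩
          exact ⟨hρΩh ω, by rw [Set.mem_preimage, hgρ ω]; exact hω⟩
        · rintro ⟨hxΩ, hxg⟩
          exact ⟨g x, hxg, hρg x hxΩ⟩
      rw [himg]
      refine ⟨hΩhm.inter (hgm hB), ?_⟩
      rw [Measure.map_apply hρm (hΩhm.inter (hgm hB))]
      have : ρ ⁻¹' (Ωh ∩ g ⁻¹' B) = B := by
        ext ω
        simp only [Set.mem_preimage, Set.mem_inter_iff]
        constructor
        · rintro ⟨_, h2⟩
          rwa [hgρ ω] at h2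
        · intro h
          exact ⟨hρΩh ω, by rwa [hgρ ω]⟩
      rw [this]
    · intro B hB _
      exact MeasurableSet.univ.inter (hρm hB)
    · intro ω _
      funext t
      show eW (wndAt n t (fun s => ω (s+1))) = eW (wndAt n (t+1) ω)
      congr 1
      funext i
      show ω (t + (i:ℕ) - n + 1) = ω ((t+1) + (i:ℕ) - n)
      congr 1
      ring

end Block

lemma matrix_pow_ne_zero (n l : ℕ) (eW : (Fin (2*n+1) → A) ≃ Fin l) (p' : A → ℝ≥0∞)
    (hp'0 : ∀ s, p' s ≠ 0) (v v' : Fin l) :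
    ((Matrix.of fun a b => transw n p' (eW.symm a) (eW.symm b)) ^ (2*n+1)) v v' ≠ 0 := by
  classical
  set u := eW.symm v with hu
  set u' := eW.symm v' with hu'
  set d : ℕ → A := fun m => if h : m < 2*n+1 then u ⟨m, h⟩ else
    (if h2 : m - (2*n+1) < 2*n+1 then u' ⟨m - (2*n+1), h2⟩ else u ⟨0, by omega⟩) with hd
  set c : ℕ → Fin l := fun t => eW (fun i2 : Fin (2*n+1) => d ((i2:ℕ) + t)) with hc
  have hc0 : c 0 = v := by
    rw [hc]
    simp only
    have : (fun i2 : Fin (2*n+1) => d ((i2:ℕ) + 0)) = u := by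
      funext i2
      rw [hd]
      simp only
      rw [dif_pos (by omega : (i2:ℕ) + 0 < 2*n+1)]
      congr 1
    rw [this, hu, Equiv.apply_symm_apply]
  have hcL : c (2*n+1) = v' := by
    rw [hc]
    simp only
    have : (fun i2 : Fin (2*n+1) => d ((i2:ℕ) + (2*n+1))) = u' := by
      funext i2
      rw [hd]
      simp only
      rw [dif_neg (by omega : ¬((i2:ℕ) + (2*n+1) < 2*n+1)),
        dif_pos (by omega : (i2:ℕ) + (2*n+1) - (2*n+1) < 2*n+1)]
      congr 1
      exact Fin.ext (by simp)
    rw [this, hu', Equiv.apply_symm_apply]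
  have hstep : ∀ t, t < 2*n+1 →
      (Matrix.of fun a b => transw n p' (eW.symm a) (eW.symm b)) (c t) (c (t+1)) ≠ 0 := by
    intro t _
    show transw n p' (eW.symm (c t)) (eW.symm (c (t+1))) ≠ 0
    rw [hc]
    simp only
    rw [Equiv.symm_apply_apply, Equiv.symm_apply_apply]
    have hcompat : Compat n (fun i2 : Fin (2*n+1) => d ((i2:ℕ) + t))
        (fun i2 : Fin (2*n+1) => d ((i2:ℕ) + (t+1))) := by
      intro j hj
      show d ((⟨j, by omega⟩ : Fin (2*n+1)) + (t+1)) = d ((⟨j+1, hj⟩ : Fin (2*n+1)) + t)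
      congr 1
      simp only [Fin.val_mk]
      omega
    rw [transw, if_pos hcompat]
    exact hp'0 _
  have := pow_ne_zero_of_chain _ (2*n+1) c hstep
  rw [hc0, hcL] at this
  exact this

lemma matrix_pow_succ_ne_zero (n l : ℕ) (eW : (Fin (2*n+1) → A) ≃ Fin l) (p' : A → ℝ≥0∞)
    (hp'0 : ∀ s, p' s ≠ 0) (v : Fin l) :
    ((Matrix.of fun a b => transw n p' (eW.symm a) (eW.symm b)) ^ (2*n+2)) v v ≠ 0 := by
  classical
  set u := eW.symm v with hu
  set d : ℕ → A := fun m => if h : m < 2*n+1 then u ⟨m, h⟩ else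
    (if h2 : m - (2*n+2) < 2*n+1 then u ⟨m - (2*n+2), h2⟩ else u ⟨0, by omega⟩) with hd
  set c : ℕ → Fin l := fun t => eW (fun i2 : Fin (2*n+1) => d ((i2:ℕ) + t)) with hc
  have hc0 : c 0 = v := by
    rw [hc]
    simp only
    have : (fun i2 : Fin (2*n+1) => d ((i2:ℕ) + 0)) = u := by
      funext i2
      rw [hd]
      simp only
      rw [dif_pos (by omega : (i2:ℕ) + 0 < 2*n+1)]
      congr 1
    rw [this, hu, Equiv.apply_symm_apply]
  have hcL : c (2*n+2) = v := by
    rw [hc]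
    simp only
    have : (fun i2 : Fin (2*n+1) => d ((i2:ℕ) + (2*n+2))) = u := by
      funext i2
      rw [hd]
      simp only
      rw [dif_neg (by omega : ¬((i2:ℕ) + (2*n+2) < 2*n+1)),
        dif_pos (by omega : (i2:ℕ) + (2*n+2) - (2*n+2) < 2*n+1)]
      congr 1
      exact Fin.ext (by simp)
    rw [this, hu, Equiv.apply_symm_apply]
  have hstep : ∀ t, t < 2*n+2 →
      (Matrix.of fun a b => transw n p' (eW.symm a) (eW.symm b)) (c t) (c (t+1)) ≠ 0 := by
    intro t _
    show transw n p' (eW.symm (c t)) (eW.symm (c (t+1))) ≠ 0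
    rw [hc]
    simp only
    rw [Equiv.symm_apply_apply, Equiv.symm_apply_apply]
    have hcompat : Compat n (fun i2 : Fin (2*n+1) => d ((i2:ℕ) + t))
        (fun i2 : Fin (2*n+1) => d ((i2:ℕ) + (t+1))) := by
      intro j hj
      show d ((⟨j, by omega⟩ : Fin (2*n+1)) + (t+1)) = d ((⟨j+1, hj⟩ : Fin (2*n+1)) + t)
      congr 1
      simp only [Fin.val_mk]
      omega
    rw [transw, if_pos hcompat]
    exact hp'0 _
  have := pow_ne_zero_of_chain _ (2*n+2) c hstep
  rw [hc0, hcL] at this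
  exact this

theorem stmt13 {M : Type*} [MetricSpace M] [TopologicalSpace.SeparableSpace M]
    [MeasurableSpace M]
    (μ : Measure M) [IsProbabilityMeasure μ]
    (hballs : ∀ (x : M) (r : ℝ), MeasurableSet (Metric.ball x r))
    (T : M → M) (hTbij : Function.Bijective T) (hTmeas : Measurable T)
    (hTpres : ∀ A : Set M, MeasurableSet A → μ (T '' A) = μ A)
    -- (M, Σ, μ, T) is a Bernoulli system: isomorphic to a Bernoulli shift
    (hBern : ∃ (N : ℕ) (p : Fin N → ℝ≥0∞) (ν : Measure (ℤ → Fin N))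
        (_ : IsProbabilityMeasure ν) (φ : M → (ℤ → Fin N)),
      0 < N ∧ (∑ k, p k = 1) ∧
      (∀ (F : Finset ℤ) (a : ℤ → Fin N),
        ν {ω | ∀ i ∈ F, ω i = a i} = ∏ i ∈ F, p (a i)) ∧
      IsIso μ ν T (fun ω t => ω (t + 1)) φ) :
    ∀ ε : ℝ, 0 < ε →
      ∃ (l : ℕ) (o : Fin l → M) (P : Matrix (Fin l) (Fin l) ℝ≥0∞)
        (π : Fin l → ℝ≥0∞) (ν : Measure (ℤ → Fin l))
        (_ : IsProbabilityMeasure ν) (φ : M → (ℤ → Fin l)),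
      0 < l ∧
      -- P is a stochastic matrix with stationary distribution π
      (∀ i, ∑ j, P i j = 1) ∧ (∑ i, π i = 1) ∧ (∀ j, ∑ i, π i * P i j = π j) ∧
      -- ν is the law of the corresponding stationary Markov process
      (∀ (k : ℤ) (r : ℕ) (a : ℕ → Fin l),
        ν {ω | ∀ t : ℕ, t ≤ r → ω (k + t) = a t}
          = π (a 0) * ∏ t ∈ Finset.range r, P (a t) (a (t + 1))) ∧
      -- irreducibility
      (∀ i j, ∃ k : ℕ, 1 ≤ k ∧ 0 < (P ^ k) i j) ∧
      -- aperiodicity: gcd of return times is 1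
      (∀ i, ∀ d : ℕ, (∀ n : ℕ, 1 ≤ n → 0 < (P ^ n) i i → d ∣ n) → d = 1) ∧
      -- ε-congruence
      IsIso μ ν T (fun ω t => ω (t + 1)) φ ∧
      μ {m : M | ε ≤ dist m (o (φ m 0))} < ENNReal.ofReal ε := by
  intro ε hε
  classical
  obtain ⟨N, p, ν₀, hν₀i, φ₀, hN, hpsum, hcyl₀, hiso₀⟩ := hBern
  haveI := hν₀i
  obtain ⟨N', p', proj, plift, hN', hp'0, hp'sum, hpl, hlp, hp'⟩ := exists_relabel p hpsum
  obtain ⟨ν₁, hν₁i, hcyl₁, hisoR⟩ := relabel_iso p p' proj plift ν₀ hcyl₀ hp'0 hpl hlp hp'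
  haveI := hν₁i
  set φ₁ : M → (ℤ → Fin N') := (fun ω t => proj (ω t)) ∘ φ₀ with hφ₁def
  have hiso1 : IsIso μ ν₁ T (fun ω t => ω (t + 1)) φ₁ := isIso_comp hiso₀ hisoR
  have hiso1' := hiso1
  obtain ⟨Mh1, Ω1h, hMh1m, hΩ1hm, hMh1c, hΩ1hc, hTM1, hSΩ1, hbij1, himg1, hpre1, heqv1⟩ := hiso1'
  -- geometry
  have hMne : Nonempty M := by
    by_contra h
    rw [not_nonempty_iff] at h
    have h1 := measure_univ (μ := μ)
    rw [Set.univ_eq_empty_iff.mpr h, measure_empty] at h1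
    exact one_ne_zero h1.symm
  obtain ⟨xs, hxs⟩ := TopologicalSpace.exists_dense_seq M
  set b : ℕ → Set M := fun k => Metric.ball (xs k) (ε/2) with hb
  set U : ℕ → Set M := fun K => ⋃ k ∈ Finset.range K, b k with hU
  have hbm : ∀ k, MeasurableSet (b k) := fun k => hballs _ _
  have hUm : ∀ K, MeasurableSet (U K) :=
    fun K => MeasurableSet.biUnion (Finset.range K).countable_toSet (fun k _ => hbm k)
  have hUmono : Monotone U := by
    intro a c hac m hm
    simp only [hU, Set.mem_iUnion, Finset.mem_range] at hm ⊢
    obtain ⟨k, hk, hmk⟩ := hm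
    exact ⟨k, by omega, hmk⟩
  have hUuniv : (⋃ K, U K) = Set.univ := by
    ext m
    simp only [Set.mem_iUnion, Set.mem_univ, iff_true]
    obtain ⟨k, hk⟩ := Metric.denseRange_iff.mp hxs m (ε/2) (by positivity)
    exact ⟨k+1, Set.mem_biUnion (Finset.self_mem_range_succ k) hk⟩
  have htend := tendsto_measure_iUnion_atTop (μ := μ) hUmono
  rw [hUuniv, measure_univ] at htend
  set δ₁ : ℝ≥0∞ := ENNReal.ofReal (ε/4) ⊓ (1/2) with hδ₁
  have hδ₁pos : 0 < δ₁ := lt_min (ENNReal.ofReal_pos.mpr (by positivity)) (by norm_num)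
  have hδ₁le : δ₁ ≤ 1 := le_trans (min_le_right _ _) (by norm_num)
  have h1δ : (1 : ℝ≥0∞) - δ₁ < 1 :=
    ENNReal.sub_lt_self ENNReal.one_ne_top one_ne_zero hδ₁pos.ne'
  obtain ⟨K, hK⟩ := ((tendsto_order.1 htend).1 _ h1δ).exists
  have hUKc : μ (U K)ᶜ ≤ ENNReal.ofReal (ε/4) := by
    rw [prob_compl_eq_one_sub (hUm K)]
    calc (1:ℝ≥0∞) - μ (U K) ≤ 1 - (1 - δ₁) := by
          refine tsub_le_tsub_left ?_ 1
          exact hK.le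
      _ = δ₁ := ENNReal.sub_sub_cancel ENNReal.one_ne_top hδ₁le
      _ ≤ _ := min_le_left _ _
  -- cells
  set Qc : ℕ → Set M := fun k => b k \ U k with hQc
  set Ak : ℕ → Set M := fun k => Qc k ∩ Mh1 with hAk
  have hAkm : ∀ k, MeasurableSet (Ak k) := fun k => ((hbm k).diff (hUm k)).inter hMh1m
  set Bk : ℕ → Set (ℤ → Fin N') := fun k => φ₁ '' Ak k with hBk
  have hBkprop : ∀ k, MeasurableSet (Bk k) ∧ ν₁ (Bk k) = μ (Ak k) :=
    fun k => himg1 _ (hAkm k) Set.inter_subset_right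
  have hBksub : ∀ k, Bk k ⊆ Ω1h := by
    rintro k x ⟨m, hm, rfl⟩
    exact hbij1.mapsTo hm.2
  have happrox : ∀ k : ℕ, ∃ (nk : ℕ) (Sk : Set (Fin (2*nk+1) → Fin N')),
      ν₁ (symmDiff (Bk k) ((fun ω => wndAt nk 0 ω) ⁻¹' Sk))
        < ENNReal.ofReal (ε/(4*((K:ℝ)+1))) :=
    fun k => cyl_approx ν₁ (hBkprop k).1 (by positivity)
  choose nf Sf hSf using happrox
  set n : ℕ := Finset.sup (Finset.range K) nf with hn
  have hSls : ∀ k : ℕ, ∃ S' : Set (Fin (2*n+1) → Fin N'),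
      k ∈ Finset.range K →
        ν₁ (symmDiff (Bk k) ((fun ω => wndAt n 0 ω) ⁻¹' S'))
          < ENNReal.ofReal (ε/(4*((K:ℝ)+1))) := by
    intro k
    by_cases hk : k ∈ Finset.range K
    · obtain ⟨S', hS'⟩ := cyl_lift (Finset.le_sup (f := nf) hk) (Sf k)
      refine ⟨S', fun _ => ?_⟩
      rw [← hS']
      exact hSf k
    · exact ⟨∅, fun h => absurd h hk⟩
  choose Sl hSl using hSls
  set Ck : ℕ → Set (ℤ → Fin N') := fun k => (fun ω => wndAt n 0 ω) ⁻¹' (Sl k) with hCkdef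
  have hCkm : ∀ k, MeasurableSet (Ck k) :=
    fun k => (measurable_wndAt n 0) (Set.toFinite (Sl k)).measurableSet
  -- block construction
  set l : ℕ := Fintype.card (Fin (2*n+1) → Fin N') with hldef
  set eW : (Fin (2*n+1) → Fin N') ≃ Fin l := Fintype.equivFin _ with heW
  have hl : 0 < l := Fintype.card_pos_iff.mpr ⟨fun _ => ⟨0, hN'⟩⟩
  obtain ⟨ν, hνi, hmark, hiso2⟩ := block_iso n l eW p' ν₁ hcyl₁
  haveI := hνi
  set pt : (Fin (2*n+1) → Fin N') → M :=
    fun w => if h : ∃ k, k ∈ Finset.range K ∧ w ∈ Sl k then xs h.choose else xs 0 with hpt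
  refine ⟨l, fun v => pt (eW.symm v),
    Matrix.of (fun a b2 => transw n p' (eW.symm a) (eW.symm b2)),
    fun v => statw n p' (eW.symm v), ν, hνi,
    (fun ω t => eW (wndAt n t ω)) ∘ φ₁, hl, ?_, ?_, ?_, ?_, ?_, ?_,
    isIso_comp hiso1 hiso2, ?_⟩
  · -- row sums
    intro i
    show ∑ j, transw n p' (eW.symm i) (eW.symm j) = 1
    rw [Equiv.sum_comp eW.symm (transw n p' (eW.symm i)), row_sum n p' (eW.symm i), hp'sum]
  · -- pi sums
    show ∑ i, statw n p' (eW.symm i) = 1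
    rw [Equiv.sum_comp eW.symm (statw n p'), sum_statw n p' hp'sum]
  · -- stationarity
    intro j
    show ∑ i, statw n p' (eW.symm i) * transw n p' (eW.symm i) (eW.symm j)
      = statw n p' (eW.symm j)
    rw [Equiv.sum_comp eW.symm (fun u => statw n p' u * transw n p' u (eW.symm j))]
    exact stat_sum n p' hp'sum (eW.symm j)
  · -- markov law
    intro k r a
    exact hmark k r a
  · -- irreducibility
    intro i j
    exact ⟨2*n+1, by omega,
      pos_iff_ne_zero.mpr (matrix_pow_ne_zero n l eW p' hp'0 i j)⟩
  · -- aperiodicity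
    intro i d hd
    have h1 := hd (2*n+1) (by omega)
      (pos_iff_ne_zero.mpr (matrix_pow_ne_zero n l eW p' hp'0 i i))
    have h2 := hd (2*n+2) (by omega)
      (pos_iff_ne_zero.mpr (matrix_pow_succ_ne_zero n l eW p' hp'0 i))
    have h3 := Nat.dvd_sub h2 h1
    rw [show 2*n+2 - (2*n+1) = 1 by omega] at h3
    exact Nat.dvd_one.mp h3
  · -- epsilon estimate
    have hcover : {m : M | ε ≤ dist m (pt (eW.symm
          (((fun ω t => eW (wndAt n t ω)) ∘ φ₁) m 0)))} ⊆
        Mh1ᶜ ∪ (U K)ᶜ ∪ ⋃ k ∈ Finset.range K,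
          (Mh1 ∩ φ₁ ⁻¹' (symmDiff (Bk k) (Ck k))) := by
      intro m hm
      by_cases h1 : m ∈ Mh1
      swap
      · exact Or.inl (Or.inl h1)
      by_cases h2 : m ∈ U K
      swap
      · exact Or.inl (Or.inr h2)
      by_cases h3 : ∀ k ∈ Finset.range K, φ₁ m ∉ symmDiff (Bk k) (Ck k)
      swap
      · push_neg at h3
        obtain ⟨k, hk, hkin⟩ := h3
        exact Or.inr (Set.mem_biUnion hk ⟨h1, hkin⟩)
      exfalso
      -- find the cell containing m
      have hex2 : ∃ k, m ∈ b k := by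
        rw [hU] at h2
        simp only [Set.mem_iUnion] at h2
        obtain ⟨k0, _, hk0b⟩ := h2
        exact ⟨k0, hk0b⟩
      have hkK : Nat.find hex2 < K := by
        rw [hU] at h2
        simp only [Set.mem_iUnion] at h2
        obtain ⟨k0, hk0K, hk0b⟩ := h2
        have := Nat.find_min' hex2 hk0b
        simp only [Finset.mem_range] at hk0K
        omega
      set k := Nat.find hex2 with hkdef
      have hmQ : m ∈ Qc k := by
        refine ⟨Nat.find_spec hex2, ?_⟩
        intro hmU
        rw [hU] at hmU
        simp only [Set.mem_iUnion] at hmU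
        obtain ⟨j, hj, hjb⟩ := hmU
        simp only [Finset.mem_range] at hj
        exact absurd hjb (Nat.find_min hex2 (by omega))
      have hmA : m ∈ Ak k := ⟨hmQ, h1⟩
      have hmB : φ₁ m ∈ Bk k := ⟨m, hmA, rfl⟩
      have hmC : φ₁ m ∈ Ck k := by
        by_contra hc
        exact h3 k (Finset.mem_range.mpr hkK) (Set.mem_symmDiff.mpr (Or.inl ⟨hmB, hc⟩))
      have hex3 : ∃ k', k' ∈ Finset.range K ∧ wndAt n 0 (φ₁ m) ∈ Sl k' :=
        ⟨k, Finset.mem_range.mpr hkK, hmC⟩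
      have hk2spec := hex3.choose_spec
      have hmC2 : φ₁ m ∈ Ck hex3.choose := hk2spec.2
      have hmB2 : φ₁ m ∈ Bk hex3.choose := by
        by_contra hc
        exact h3 _ hk2spec.1 (Set.mem_symmDiff.mpr (Or.inr ⟨hmC2, hc⟩))
      have hmA2 : m ∈ Ak hex3.choose := by
        obtain ⟨m', hm', heq⟩ := hmB2
        have : m' = m := hbij1.injOn hm'.2 h1 heq
        rwa [this] at hm'
      have hdist : dist m (xs hex3.choose) < ε/2 := hmA2.1.1
      have ho : pt (eW.symm (((fun ω t => eW (wndAt n t ω)) ∘ φ₁) m 0)) = xs hex3.choose := by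
        show pt (eW.symm (eW (wndAt n 0 (φ₁ m)))) = xs hex3.choose
        rw [Equiv.symm_apply_apply]
        show (if h : ∃ k ∈ Finset.range K, wndAt n 0 (φ₁ m) ∈ Sl k then xs h.choose else xs 0)
          = xs hex3.choose
        rw [dif_pos hex3]
      rw [Set.mem_setOf_eq, ho] at hm
      linarith
    have hEk : ∀ k ∈ Finset.range K,
        μ (Mh1 ∩ φ₁ ⁻¹' (symmDiff (Bk k) (Ck k))) < ENNReal.ofReal (ε/(4*((K:ℝ)+1))) := by
      intro k hk
      set D := Ω1h ∩ symmDiff (Bk k) (Ck k) with hD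
      have hDm : MeasurableSet D := hΩ1hm.inter (((hBkprop k).1).symmDiff (hCkm k))
      have heq : Mh1 ∩ φ₁ ⁻¹' (symmDiff (Bk k) (Ck k)) = Mh1 ∩ φ₁ ⁻¹' D := by
        ext m'
        constructor
        · rintro ⟨hm1, hm2⟩
          exact ⟨hm1, hbij1.mapsTo hm1, hm2⟩
        · rintro ⟨hm1, _, hm2⟩
          exact ⟨hm1, hm2⟩
      have hEm : MeasurableSet (Mh1 ∩ φ₁ ⁻¹' D) := hpre1 D hDm Set.inter_subset_left
      rw [heq]
      have himgE := himg1 _ hEm Set.inter_subset_left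
      rw [← himgE.2]
      refine lt_of_le_of_lt (measure_mono ?_) (hSl k hk)
      rintro x ⟨m', ⟨_, hm2⟩, rfl⟩
      exact hm2.2
    calc μ {m : M | ε ≤ dist m (pt (eW.symm (((fun ω t => eW (wndAt n t ω)) ∘ φ₁) m 0)))}
        ≤ μ (Mh1ᶜ ∪ (U K)ᶜ ∪ ⋃ k ∈ Finset.range K,
            (Mh1 ∩ φ₁ ⁻¹' (symmDiff (Bk k) (Ck k)))) := measure_mono hcover
      _ ≤ μ (Mh1ᶜ ∪ (U K)ᶜ) + μ (⋃ k ∈ Finset.range K,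
            (Mh1 ∩ φ₁ ⁻¹' (symmDiff (Bk k) (Ck k)))) := measure_union_le _ _
      _ ≤ (μ Mh1ᶜ + μ (U K)ᶜ) + ∑ k ∈ Finset.range K,
            μ (Mh1 ∩ φ₁ ⁻¹' (symmDiff (Bk k) (Ck k))) :=
          add_le_add (measure_union_le _ _) (measure_biUnion_finset_le _ _)
      _ ≤ (0 + ENNReal.ofReal (ε/4)) + ∑ k ∈ Finset.range K,
            ENNReal.ofReal (ε/(4*((K:ℝ)+1))) :=
          add_le_add (add_le_add (le_of_eq hMh1c) hUKc)
            (Finset.sum_le_sum (fun k hk => (hEk k hk).le))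
      _ ≤ ENNReal.ofReal (ε/4) + ENNReal.ofReal (ε/4) := by
          rw [zero_add]
          refine add_le_add le_rfl ?_
          rw [Finset.sum_const, Finset.card_range, nsmul_eq_mul]
          have hcast : (K : ℝ≥0∞) * ENNReal.ofReal (ε/(4*((K:ℝ)+1)))
              = ENNReal.ofReal ((K:ℝ) * (ε/(4*((K:ℝ)+1)))) := by
            rw [ENNReal.ofReal_mul (by positivity), ENNReal.ofReal_natCast]
          rw [hcast]
          refine ENNReal.ofReal_le_ofReal ?_
          have hKpos : (0:ℝ) < (K:ℝ) + 1 := by positivity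
          have h1 : (K:ℝ) * (ε/(4*((K:ℝ)+1))) = (ε/4) * ((K:ℝ)/((K:ℝ)+1)) := by
            field_simp
          rw [h1]
          have h2 : (K:ℝ)/((K:ℝ)+1) ≤ 1 := by
            rw [div_le_one hKpos]
            linarith
          calc (ε/4) * ((K:ℝ)/((K:ℝ)+1)) ≤ (ε/4) * 1 :=
                mul_le_mul_of_nonneg_left h2 (by positivity)
            _ = ε/4 := mul_one _
      _ = ENNReal.ofReal (ε/2) := by
          rw [← ENNReal.ofReal_add (by positivity) (by positivity)]
          congr 1
          ring
      _ < ENNReal.ofReal ε := (ENNReal.ofReal_lt_ofReal_iff hε).mpr (by linarith)
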